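/- Let n ≥ 1 be a natural number and z ∈ ℂ with |z| < 1. Then ∫₀¹ z·(1 − (zt)^n)^{−(n+2)/n}·(1 + (zt)^n)^{−1} dt = ∑_{k=0}^∞ ∑_{l=0}^∞ ((1/n)_{k+l} (1+2/n)_k (1)_l)/((1+1/n)_{k+l} · k! · l!) · (−1)^l · z^{n(k+l)+1}, where (1 − (zt)^n)^{−(n+2)/n} is the principal-branch complex power. In other words, the analytic part of the harmonic shear of the polygonal mapping φ(z) = ∫₀^z (1−ζ^n)^{−2/n} dζ with dilatation ω(z) = z^{2n} is h(z) = z·F₁(1/n, 1+2/n, 1; 1+1/n; z^n, −z^n). -/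

import Mathlib

open Polynomial Filter Topology MeasureTheory

noncomputable def bcoef (c : ℂ) (k : ℕ) : ℂ := (ascPochhammer ℂ k).eval c / (Nat.factorial k)

lemma asc_eval_succ (c : ℂ) (k : ℕ) :
    (ascPochhammer ℂ (k+1)).eval c = (ascPochhammer ℂ k).eval c * (c + k) := by
  rw [ascPochhammer_succ_right]
  simp

lemma bcoef_zero (c : ℂ) : bcoef c 0 = 1 := by simp [bcoef]

lemma bcoef_succ (c : ℂ) (k : ℕ) :
    bcoef c (k+1) = bcoef c k * (c + k) / (k+1) := by
  rw [bcoef, bcoef, asc_eval_succ, Nat.factorial_succ]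
  push_cast
  field_simp

lemma tendsto_ratio (a b : ℝ) :
    Tendsto (fun k : ℕ => ((k : ℝ) + a) / ((k : ℝ) + b)) atTop (𝓝 1) := by
  have h1 : Tendsto (fun k : ℕ => 1 + (a - b) / ((k : ℝ) + b)) atTop (𝓝 (1 + 0)) := by
    refine tendsto_const_nhds.add ?_
    exact Tendsto.div_atTop tendsto_const_nhds
      (tendsto_atTop_add_const_right _ _ tendsto_natCast_atTop_atTop)
  rw [add_zero] at h1
  refine h1.congr' ?_
  have hev : ∀ᶠ k : ℕ in atTop, 0 < (k:ℝ) + b :=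
    (tendsto_atTop_add_const_right _ b tendsto_natCast_atTop_atTop).eventually_gt_atTop 0
  filter_upwards [hev] with k hk
  field_simp
  ring

/-- Summability with a `(k+1)` weight, needed for termwise derivatives. -/
lemma summable_weighted (c : ℂ) {r : ℝ} (hr0 : 0 ≤ r) (hr : r < 1) :
    Summable (fun k : ℕ => ((k:ℝ)+1) * ‖bcoef c k‖ * r ^ k) := by
  obtain ⟨r', hrr', hr'1⟩ := exists_between hr
  refine summable_of_ratio_norm_eventually_le hr'1 ?_
  have hq : Tendsto (fun k : ℕ => (((k:ℝ)+2)/((k:ℝ)+1)) * ((‖c‖+(k:ℝ))/((k:ℝ)+1)) * r)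
      atTop (𝓝 (1 * 1 * r)) := by
    refine Tendsto.mul ?_ tendsto_const_nhds
    refine Tendsto.mul ?_ ?_
    · exact tendsto_ratio 2 1
    · have := tendsto_ratio ‖c‖ 1
      refine this.congr (fun k => by ring_nf)
  rw [one_mul, one_mul] at hq
  filter_upwards [hq.eventually_le_const hrr'] with k hk
  have hk1 : (0:ℝ) < (k:ℝ) + 1 := by positivity
  have hb : ‖bcoef c (k+1)‖ = ‖bcoef c k‖ * ‖c + k‖ / ((k:ℝ)+1) := by
    rw [bcoef_succ, norm_div, norm_mul]
    congr 1
    rw [show ((k:ℂ)+1) = ((k+1:ℕ):ℂ) by push_cast; ring]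
    rw [Complex.norm_natCast]
    push_cast
    ring
  have hnorm : ∀ x : ℝ, 0 ≤ x → ‖x‖ = x := fun x hx => Real.norm_of_nonneg hx
  rw [hnorm _ (by positivity), hnorm _ (by positivity)]
  push_cast
  have hcb : ‖c + (k:ℂ)‖ ≤ ‖c‖ + (k:ℝ) := by
    calc ‖c + (k:ℂ)‖ ≤ ‖c‖ + ‖(k:ℂ)‖ := norm_add_le _ _
    _ = ‖c‖ + k := by simp
  calc ((k:ℝ)+1+1) * ‖bcoef c (k+1)‖ * r ^ (k+1)
      = ((k:ℝ)+2) * (‖bcoef c k‖ * ‖c + (k:ℂ)‖ / ((k:ℝ)+1)) * (r ^ k * r) := by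
        rw [hb]; push_cast; ring
    _ ≤ ((k:ℝ)+2) * (‖bcoef c k‖ * (‖c‖ + (k:ℝ)) / ((k:ℝ)+1)) * (r ^ k * r) := by
        gcongr
    _ = ((((k:ℝ)+2)/((k:ℝ)+1)) * ((‖c‖+(k:ℝ))/((k:ℝ)+1)) * r) * (((k:ℝ)+1) * ‖bcoef c k‖ * r ^ k) := by
        field_simp
    _ ≤ r' * (((k:ℝ)+1) * ‖bcoef c k‖ * r ^ k) := by
        have : 0 ≤ ((k:ℝ)+1) * ‖bcoef c k‖ * r ^ k := by positivity
        exact mul_le_mul_of_nonneg_right hk this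

lemma summable_norm_bcoef_pow (c : ℂ) {r : ℝ} (hr0 : 0 ≤ r) (hr : r < 1) :
    Summable (fun k : ℕ => ‖bcoef c k‖ * r ^ k) := by
  refine (summable_weighted c hr0 hr).of_nonneg_of_le (fun k => by positivity) (fun k => ?_)
  have h1 : (1:ℝ) ≤ (k:ℝ) + 1 := by linarith [Nat.cast_nonneg (α := ℝ) k]
  have h2 : (0:ℝ) ≤ ‖bcoef c k‖ * r ^ k := by positivity
  calc ‖bcoef c k‖ * r ^ k = 1 * (‖bcoef c k‖ * r ^ k) := by ring
    _ ≤ ((k:ℝ)+1) * (‖bcoef c k‖ * r ^ k) := mul_le_mul_of_nonneg_right h1 h2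
    _ = ((k:ℝ)+1) * ‖bcoef c k‖ * r ^ k := by ring

lemma summable_bcoef_pow (c : ℂ) {w : ℂ} (hw : ‖w‖ < 1) :
    Summable (fun k : ℕ => bcoef c k * w ^ k) := by
  refine Summable.of_norm ?_
  refine (summable_norm_bcoef_pow c (norm_nonneg w) hw).congr (fun k => ?_)
  rw [norm_mul, norm_pow]


noncomputable def gfun (c : ℂ) : ℂ → ℂ := fun y => ∑' k : ℕ, bcoef c k * y ^ k

lemma deriv_term_bound (c : ℂ) {s : ℝ} (hs0 : 0 < s) {x : ℂ} (hx : ‖x‖ ≤ s) (k : ℕ) :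
    ‖bcoef c k * ((k:ℂ) * x ^ (k-1))‖ ≤ s⁻¹ * (((k:ℝ)+1) * ‖bcoef c k‖ * s ^ k) := by
  rcases k with _ | m
  · simp [hs0.le]
    positivity
  · rw [norm_mul, norm_mul, norm_pow]
    have h1 : ‖x‖ ^ (m + 1 - 1) ≤ s ^ m := by
      simpa using pow_le_pow_left₀ (norm_nonneg x) hx m
    have h2 : ‖((m:ℂ)+1)‖ = (m:ℝ)+1 := by
      rw [show ((m:ℂ)+1) = ((m+1:ℕ):ℂ) by push_cast; ring, Complex.norm_natCast]; push_cast; ring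
    push_cast
    rw [h2]
    have : s ^ (m+1) = s * s ^ m := by ring
    rw [this]
    have hb := norm_nonneg (bcoef c (m+1))
    calc ‖bcoef c (m+1)‖ * (((m:ℝ)+1) * ‖x‖ ^ (m+1-1))
        ≤ ‖bcoef c (m+1)‖ * (((m:ℝ)+1) * s ^ m) := by gcongr
      _ ≤ ‖bcoef c (m+1)‖ * ((((m:ℝ)+1)+1) * s ^ m) := by
          have : (0:ℝ) ≤ s ^ m := by positivity
          nlinarith
      _ = s⁻¹ * ((((m:ℝ)+1)+1) * ‖bcoef c (m+1)‖ * (s * s ^ m)) := by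
          field_simp

lemma summable_deriv_term (c : ℂ) {y : ℂ} (hy : ‖y‖ < 1) :
    Summable (fun k : ℕ => bcoef c k * ((k:ℂ) * y ^ (k-1))) := by
  obtain ⟨s, hs1, hs2⟩ := exists_between hy
  have hs0 : 0 < s := lt_of_le_of_lt (norm_nonneg y) hs1
  refine Summable.of_norm (Summable.of_nonneg_of_le (fun k => norm_nonneg _)
    (fun k => deriv_term_bound c hs0 hs1.le k) ?_)
  exact (summable_weighted c hs0.le hs2).mul_left _

lemma hasDerivAt_gfun (c : ℂ) {y : ℂ} (hy : ‖y‖ < 1) :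
    HasDerivAt (gfun c) (∑' k : ℕ, bcoef c k * ((k:ℂ) * y ^ (k-1))) y := by
  obtain ⟨s, hs1, hs2⟩ := exists_between hy
  have hs0 : 0 < s := lt_of_le_of_lt (norm_nonneg y) hs1
  have H := hasDerivAt_tsum_of_isPreconnected
    (u := fun k : ℕ => s⁻¹ * (((k:ℝ)+1) * ‖bcoef c k‖ * s ^ k))
    (g := fun (k:ℕ) (x:ℂ) => bcoef c k * x ^ k)
    (g' := fun (k:ℕ) (x:ℂ) => bcoef c k * ((k:ℂ) * x ^ (k-1)))
    (t := Metric.ball (0:ℂ) s) (y₀ := 0) (y := y)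
    ((summable_weighted c hs0.le hs2).mul_left _)
    Metric.isOpen_ball ((convex_ball (0:ℂ) s).isPreconnected)
    (fun k x _ => (hasDerivAt_pow k x).const_mul _)
    (fun k x hx => deriv_term_bound c hs0
      (by rw [Metric.mem_ball, dist_zero_right] at hx; exact hx.le) k)
    (by rw [Metric.mem_ball, dist_zero_right]; simpa using hs0)
    (summable_bcoef_pow c (by simp [hs0]))
    (by rw [Metric.mem_ball, dist_zero_right]; exact hs1)
  exact H

lemma funeq (c : ℂ) {y : ℂ} (hy : ‖y‖ < 1) :
    (1 - y) * (∑' k : ℕ, bcoef c k * ((k:ℂ) * y ^ (k-1))) = c * gfun c y := by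
  set h : ℕ → ℂ := fun k => bcoef c k * ((k:ℂ) * y ^ (k-1)) with hh
  have hsum : Summable h := summable_deriv_term c hy
  have hsum2 : Summable (fun k : ℕ => bcoef c k * (k:ℂ) * y ^ k) := by
    refine Summable.of_norm ?_
    refine Summable.of_nonneg_of_le (fun k => norm_nonneg _) (fun k => ?_)
      (summable_weighted c (norm_nonneg y) hy)
    rw [norm_mul, norm_mul, norm_pow]
    have h2 : ‖(k:ℂ)‖ = (k:ℝ) := by simp
    rw [h2]
    have : (0:ℝ) ≤ ‖bcoef c k‖ * ‖y‖^k := by positivity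
    nlinarith [norm_nonneg (bcoef c k), pow_nonneg (norm_nonneg y) k]
  have hyD : y * (∑' k, h k) = ∑' k : ℕ, bcoef c k * (k:ℂ) * y ^ k := by
    rw [← tsum_mul_left]
    refine tsum_congr (fun k => ?_)
    rcases k with _ | m
    · simp [hh]
    · simp only [hh]
      rw [show m + 1 - 1 = m from rfl, pow_succ]
      ring
  have hshift : (∑' k, h k) = ∑' k : ℕ, h (k+1) := by
    rw [Summable.tsum_eq_zero_add hsum]
    simp [hh]
  have hsucc : Summable (fun k : ℕ => h (k+1)) := by
    rwa [summable_nat_add_iff]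
  have key : ∀ k : ℕ, h (k+1) - bcoef c k * (k:ℂ) * y ^ k = c * (bcoef c k * y ^ k) := by
    intro k
    have hk1 : ((k:ℂ)+1) ≠ 0 := by
      have h0 : ((k+1:ℕ):ℂ) ≠ 0 := Nat.cast_ne_zero.mpr (Nat.succ_ne_zero k)
      push_cast at h0
      exact h0
    have hb : bcoef c (k+1) * ((k:ℂ)+1) = bcoef c k * (c + k) := by
      rw [bcoef_succ]
      field_simp
    simp only [hh]
    have : bcoef c (k+1) * (((k:ℕ)+1:ℂ) * y ^ (k+1-1)) = bcoef c k * (c+k) * y ^ k := by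
      rw [show k+1-1 = k from rfl, ← mul_assoc]
      rw [show ((k:ℕ)+1:ℂ) = ((k:ℂ)+1) by push_cast; ring] at *
      rw [hb]
    push_cast at this ⊢
    rw [this]
    ring
  calc (1 - y) * (∑' k, h k) = (∑' k, h (k+1)) - y * (∑' k, h k) := by
        rw [← hshift]; ring
    _ = (∑' k, h (k+1)) - ∑' k : ℕ, bcoef c k * (k:ℂ) * y ^ k := by rw [hyD]
    _ = ∑' k : ℕ, (h (k+1) - bcoef c k * (k:ℂ) * y ^ k) := (Summable.tsum_sub hsucc hsum2).symm
    _ = ∑' k : ℕ, c * (bcoef c k * y ^ k) := tsum_congr key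
    _ = c * gfun c y := tsum_mul_left


lemma one_sub_ne_zero {y : ℂ} (hy : ‖y‖ < 1) : (1 : ℂ) - y ≠ 0 := by
  intro h
  have : (1:ℂ) = y := by linear_combination h
  rw [← this] at hy
  simp at hy

lemma one_sub_mem_slitPlane {y : ℂ} (hy : ‖y‖ < 1) : (1 : ℂ) - y ∈ Complex.slitPlane := by
  have := Complex.mem_slitPlane_of_norm_lt_one (z := -y) (by simpa using hy)
  simpa [sub_eq_add_neg] using this

lemma hasDerivAt_H (c : ℂ) {y : ℂ} (hy : ‖y‖ < 1) :
    HasDerivAt (fun x => gfun c x * (1 - x) ^ c) 0 y := by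
  have hg := hasDerivAt_gfun c hy
  have h1 : HasDerivAt (fun x : ℂ => (1 : ℂ) - x) (-1) y := by
    simpa using (hasDerivAt_id y).const_sub 1
  have h2 := h1.cpow_const (c := c) (one_sub_mem_slitPlane hy)
  have h3 := hg.mul h2
  refine h3.congr_deriv (Eq.symm ?_)
  have hne := one_sub_ne_zero hy
  have hsplit : (1 - y) ^ c = (1 - y) ^ (c - 1) * (1 - y) := by
    rw [show c = (c - 1) + 1 by ring, Complex.cpow_add _ _ hne, Complex.cpow_one]
    ring_nf
  rw [hsplit]
  have := funeq c hy
  linear_combination (-((1-y) ^ (c-1))) * this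
lemma gfun_mul_cpow (c : ℂ) {w : ℂ} (hw : ‖w‖ < 1) :
    gfun c w * (1 - w) ^ c = 1 := by
  set H : ℂ → ℂ := fun x => gfun c x * (1 - x) ^ c with hH
  have key : ∀ t : ℝ, t ∈ Set.Icc (0:ℝ) 1 → H ((t:ℂ) * w) = H ((0:ℝ) * w) := by
    have hderiv : ∀ t : ℝ, t ∈ Set.Ico (0:ℝ) 1 →
        HasDerivWithinAt (fun t : ℝ => H ((t:ℂ) * w)) 0 (Set.Ici t) t := by
      intro t ht
      have htw : ‖(t:ℂ) * w‖ < 1 := by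
        rw [norm_mul, Complex.norm_real]
        rcases ht with ⟨h0, h1⟩
        calc ‖t‖ * ‖w‖ ≤ 1 * ‖w‖ := by
              apply mul_le_mul_of_nonneg_right _ (norm_nonneg w)
              rw [Real.norm_of_nonneg h0]; exact h1.le
          _ = ‖w‖ := one_mul _
          _ < 1 := hw
      have hHd : HasDerivAt H 0 ((t:ℂ) * w) := hasDerivAt_H c htw
      have hin : HasDerivAt (fun u : ℂ => H (u * w)) (0 * w) (t:ℂ) := by
        exact HasDerivAt.comp (t:ℂ) hHd (hasDerivAt_mul_const w)
      have := hin.comp_ofReal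
      rw [zero_mul] at this
      exact this.hasDerivWithinAt
    have hcont : ContinuousOn (fun t : ℝ => H ((t:ℂ) * w)) (Set.Icc 0 1) := by
      intro t ht
      have htw : ‖(t:ℂ) * w‖ < 1 := by
        rw [norm_mul, Complex.norm_real]
        rcases ht with ⟨h0, h1⟩
        calc ‖t‖ * ‖w‖ ≤ 1 * ‖w‖ := by
              apply mul_le_mul_of_nonneg_right _ (norm_nonneg w)
              rw [Real.norm_of_nonneg h0]; exact h1
          _ = ‖w‖ := one_mul _
          _ < 1 := hw
      have hHd : HasDerivAt H 0 ((t:ℂ) * w) := hasDerivAt_H c htw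
      have hin : HasDerivAt (fun u : ℂ => H (u * w)) (0 * w) (t:ℂ) := by
        exact HasDerivAt.comp (t:ℂ) hHd (hasDerivAt_mul_const w)
      exact hin.comp_ofReal.continuousAt.continuousWithinAt
    exact fun t ht => constant_of_has_deriv_right_zero hcont hderiv t ht
  have h1 := key 1 (by norm_num)
  simp only [Complex.ofReal_one, one_mul, Complex.ofReal_zero, zero_mul] at h1
  rw [hH] at h1
  simp only at h1
  rw [h1]
  have hg0 : gfun c 0 = 1 := by
    rw [gfun]
    rw [tsum_eq_single 0 (fun k hk => by
      rcases k with _ | m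
      · exact absurd rfl hk
      · simp)]
    simp [bcoef_zero]
  rw [hg0, sub_zero, Complex.one_cpow, one_mul]

theorem hasSum_binomial (c : ℂ) {w : ℂ} (hw : ‖w‖ < 1) :
    HasSum (fun k : ℕ => bcoef c k * w ^ k) ((1 - w) ^ (-c)) := by
  have hs := summable_bcoef_pow c hw
  have := gfun_mul_cpow c hw
  have hne : ((1:ℂ) - w) ^ c ≠ 0 := by
    intro h
    rw [h, mul_zero] at this
    exact zero_ne_one this
  have hg : gfun c w = ((1 - w) ^ c)⁻¹ := eq_inv_of_mul_eq_one_left ?_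
  · rw [Complex.cpow_neg, ← hg]
    exact hs.hasSum
  · rw [mul_comm] at this ⊢
    exact this

lemma asc_real_pos {x : ℝ} (hx : 0 < x) (m : ℕ) : 0 < (ascPochhammer ℝ m).eval x := by
  induction m with
  | zero => simp
  | succ m ih =>
      rw [ascPochhammer_succ_right, eval_mul]
      have : (0:ℝ) < eval x (X + (m:ℝ[X])) := by
        simp only [eval_add, eval_X, eval_natCast]
        positivity
      positivity

lemma asc_ofReal (x : ℝ) (m : ℕ) :
    (ascPochhammer ℂ m).eval ((x:ℝ):ℂ) = (((ascPochhammer ℝ m).eval x : ℝ) : ℂ) := by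
  rw [← ascPochhammer_map (algebraMap ℝ ℂ), show ((x:ℝ):ℂ) = algebraMap ℝ ℂ x from rfl,
    eval_map, eval₂_at_apply]
  rfl

lemma asc_succ_left_eval (x : ℂ) (m : ℕ) :
    (ascPochhammer ℂ (m+1)).eval x = x * (ascPochhammer ℂ m).eval (x+1) := by
  rw [ascPochhammer_succ_left]
  simp [eval_comp]

lemma asc_eval_ne_zero (n m : ℕ) (hn : 1 ≤ n) :
    (ascPochhammer ℂ m).eval (1/(n:ℂ)) ≠ 0 := by
  have hx : (0:ℝ) < 1/(n:ℝ) := by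
    have : (0:ℝ) < n := by exact_mod_cast hn
    positivity
  have hcast : (1/(n:ℂ)) = (((1/(n:ℝ)):ℝ):ℂ) := by push_cast; ring
  rw [hcast, asc_ofReal]
  exact_mod_cast ne_of_gt (asc_real_pos hx m)

lemma asc_shift_eval (n m : ℕ) (hn : 1 ≤ n) :
    (ascPochhammer ℂ m).eval (1 + 1/(n:ℂ)) =
      (ascPochhammer ℂ m).eval (1/(n:ℂ)) * ((n:ℂ) * m + 1) := by
  have hn0 : (n:ℂ) ≠ 0 := Nat.cast_ne_zero.mpr (by omega)
  have hA : (ascPochhammer ℂ (m+1)).eval (1/(n:ℂ))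
      = (1/(n:ℂ)) * (ascPochhammer ℂ m).eval (1/(n:ℂ) + 1) := asc_succ_left_eval _ m
  rw [asc_eval_succ] at hA
  have hcomm : (1:ℂ) + 1/(n:ℂ) = 1/(n:ℂ) + 1 := by ring
  have hinv : (n:ℂ) * (1/(n:ℂ)) = 1 := by field_simp
  rw [hcomm]
  set E := eval (1/(n:ℂ)) (ascPochhammer ℂ m) with hEdef
  set E' := eval (1/(n:ℂ)+1) (ascPochhammer ℂ m) with hE'def
  have h2 : (n:ℂ) * (E * (1/(n:ℂ) + m)) = (n:ℂ) * ((1/(n:ℂ)) * E') := by rw [hA]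
  calc E' = ((n:ℂ) * (1/(n:ℂ))) * E' := by rw [hinv]; ring
    _ = (n:ℂ) * ((1/(n:ℂ)) * E') := by ring
    _ = (n:ℂ) * (E * (1/(n:ℂ) + m)) := h2.symm
    _ = E * ((n:ℂ)*(1/(n:ℂ)) + (n:ℂ)*m) := by ring
    _ = E * ((n:ℂ)*m + 1) := by rw [hinv]; ring

lemma term_eq (n : ℕ) (hn : 1 ≤ n) (k l : ℕ) :
    (Polynomial.eval (1 / (n : ℂ)) (ascPochhammer ℂ (k + l)) *
        Polynomial.eval (1 + 2 / (n : ℂ)) (ascPochhammer ℂ k) *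
        Polynomial.eval (1 : ℂ) (ascPochhammer ℂ l)) /
      (Polynomial.eval (1 + 1 / (n : ℂ)) (ascPochhammer ℂ (k + l)) *
        (Nat.factorial k : ℂ) * (Nat.factorial l : ℂ))
    = bcoef (((n:ℂ)+2)/(n:ℂ)) k * (((n * (k + l) + 1 : ℕ) : ℂ))⁻¹ := by
  have hn0 : (n:ℂ) ≠ 0 := Nat.cast_ne_zero.mpr (by omega)
  have hE := asc_shift_eval n (k+l) hn
  have hEne := asc_eval_ne_zero n (k+l) hn
  have hkf : ((Nat.factorial k : ℂ)) ≠ 0 := Nat.cast_ne_zero.mpr (Nat.factorial_ne_zero k)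
  have hlf : ((Nat.factorial l : ℂ)) ≠ 0 := Nat.cast_ne_zero.mpr (Nat.factorial_ne_zero l)
  have hm1 : ((n * (k + l) + 1 : ℕ) : ℂ) ≠ 0 := Nat.cast_ne_zero.mpr (by omega)
  have hceq : (1:ℂ) + 2/(n:ℂ) = ((n:ℂ)+2)/(n:ℂ) := by field_simp
  rw [Nat.cast_add] at hE
  rw [hE, ascPochhammer_eval_one, ← hceq, bcoef]
  have hm1' : ((n * (k + l) + 1 : ℕ) : ℂ) = (n:ℂ) * ((k:ℂ) + (l:ℂ)) + 1 := by push_cast; ring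
  rw [hm1']
  rw [hm1'] at hm1
  push_cast at hm1'
  field_simp



lemma hasSum_prodSeries (c : ℂ) {w : ℂ} (hwn : ‖w‖ < 1) :
    HasSum (fun p : ℕ × ℕ => bcoef c p.1 * w ^ p.1 * ((-1:ℂ)^p.2 * w^p.2))
      (((1 : ℂ) - w) ^ (-c) * ((1 : ℂ) + w)⁻¹) := by
  have h1 := hasSum_binomial c hwn
  have h2 : HasSum (fun l : ℕ => (-1:ℂ)^l * w^l) ((1 + w)⁻¹) := by
    have h2' := hasSum_geometric_of_norm_lt_one (ξ := -w) (by simpa using hwn)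
    rw [sub_neg_eq_add] at h2'
    refine h2'.congr_fun fun l => ?_
    ring
  have hs1 : Summable fun k : ℕ => ‖bcoef c k * w ^ k‖ := by
    refine (summable_norm_bcoef_pow c (norm_nonneg w) hwn).congr fun k => ?_
    rw [norm_mul, norm_pow]
  have hs2 : Summable fun l : ℕ => ‖(-1:ℂ)^l * w^l‖ := by
    refine (summable_geometric_of_lt_one (norm_nonneg w) hwn).congr fun l => ?_
    rw [norm_mul, norm_pow, norm_pow, norm_neg, norm_one, one_pow, one_mul]
  exact HasSum.mul (f := fun k : ℕ => bcoef c k * w ^ k) (g := fun l : ℕ => (-1:ℂ)^l * w^l)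
    h1 h2 (summable_mul_of_summable_norm (f := fun k : ℕ => bcoef c k * w ^ k)
      (g := fun l : ℕ => (-1:ℂ)^l * w^l) hs1 hs2)

/-- The analytic part of the harmonic shear of the regular `n`-gon mapping
`φ(z) = ∫₀^z (1-ζ^n)^(-2/n) dζ` with dilatation `ω(z) = z^(2n)` is
`h(z) = z·F₁(1/n, 1+2/n, 1; 1+1/n; z^n, -z^n)`. -/
theorem polygon_shear_analytic_part_z2n
    (n : ℕ) (hn : 1 ≤ n) (z : ℂ) (hz : ‖z‖ < 1) :
    (∫ t in (0:ℝ)..1,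
        z * ((1 : ℂ) - (z * (t : ℂ)) ^ n) ^ (-(((n : ℂ) + 2) / (n : ℂ))) *
          ((1 : ℂ) + (z * (t : ℂ)) ^ n)⁻¹) =
      ∑' k : ℕ, ∑' l : ℕ,
        (Polynomial.eval (1 / (n : ℂ)) (ascPochhammer ℂ (k + l)) *
            Polynomial.eval (1 + 2 / (n : ℂ)) (ascPochhammer ℂ k) *
            Polynomial.eval (1 : ℂ) (ascPochhammer ℂ l)) /
          (Polynomial.eval (1 + 1 / (n : ℂ)) (ascPochhammer ℂ (k + l)) *
            (Nat.factorial k : ℂ) * (Nat.factorial l : ℂ)) *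
          (-1 : ℂ) ^ l * z ^ (n * (k + l) + 1) := by
  have hz' : ‖z‖ < 1 := hz
  set c : ℂ := ((n:ℂ) + 2) / (n:ℂ) with hc
  have hr1 : ‖z‖ ^ n < 1 := pow_lt_one₀ (norm_nonneg z) hz' (by omega)
  have hr0 : (0:ℝ) ≤ ‖z‖ ^ n := by positivity
  set m : ℕ × ℕ → ℕ := fun p => n * (p.1 + p.2) with hm
  set C : ℕ × ℕ → ℂ := fun p => z * bcoef c p.1 * (-1:ℂ)^p.2 * z ^ (m p) with hCd
  -- summability of ‖C‖
  have hCnorm : Summable (fun p : ℕ × ℕ => ‖C p‖) := by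
    have h1 : Summable (fun k : ℕ => ‖bcoef c k‖ * (‖z‖^n) ^ k) :=
      summable_norm_bcoef_pow c hr0 hr1
    have h2 : Summable (fun l : ℕ => (‖z‖^n) ^ l) :=
      summable_geometric_of_lt_one hr0 hr1
    have h3 := (h1.mul_of_nonneg h2 (fun k => by positivity) (fun l => by positivity)).mul_left ‖z‖
    refine h3.congr fun p => ?_
    simp only [hCd, hm, norm_mul, norm_pow, norm_neg, norm_one, one_pow, mul_one]
    rw [pow_mul, pow_add]
    ring
  -- pointwise HasSum on [0,1]
  have hptwise : ∀ t : ℝ, t ∈ Set.Icc (0:ℝ) 1 →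
      HasSum (fun p : ℕ × ℕ => C p * ((t:ℂ)) ^ (m p))
        (z * ((1 : ℂ) - (z * (t : ℂ)) ^ n) ^ (-c) * ((1 : ℂ) + (z * (t : ℂ)) ^ n)⁻¹) := by
    intro t ht
    have hwn : ‖(z * (t:ℂ))^n‖ < 1 := by
      rw [norm_pow, norm_mul, Complex.norm_real]
      have h4 : ‖z‖ * ‖t‖ ≤ ‖z‖ := by
        have : ‖t‖ ≤ 1 := by rw [Real.norm_of_nonneg ht.1]; exact ht.2
        nlinarith [norm_nonneg z]
      calc (‖z‖*‖t‖)^n ≤ ‖z‖^n := pow_le_pow_left₀ (by positivity) h4 n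
        _ < 1 := hr1
    have h3 := (hasSum_prodSeries c hwn).mul_left z
    have hfeq : (fun p : ℕ × ℕ =>
        z * (bcoef c p.1 * ((z * (t:ℂ))^n) ^ p.1 * ((-1:ℂ)^p.2 * ((z * (t:ℂ))^n)^p.2)))
        = fun p : ℕ × ℕ => C p * ((t:ℂ)) ^ (m p) := by
      funext p
      simp only [hCd, hm]
      rw [← pow_mul, ← pow_mul]
      have e1 : (z*(t:ℂ))^(n*p.1) * (z*(t:ℂ))^(n*p.2)
          = z ^ (n*(p.1+p.2)) * (t:ℂ)^(n*(p.1+p.2)) := by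
        rw [← pow_add, ← Nat.mul_add, mul_pow]
      calc z * (bcoef c p.1 * (z*(t:ℂ))^(n*p.1) * ((-1:ℂ)^p.2 * (z*(t:ℂ))^(n*p.2)))
          = z * bcoef c p.1 * (-1:ℂ)^p.2 * ((z*(t:ℂ))^(n*p.1) * (z*(t:ℂ))^(n*p.2)) := by ring
        _ = z * bcoef c p.1 * (-1:ℂ)^p.2 * z ^ (n*(p.1+p.2)) * (t:ℂ)^(n*(p.1+p.2)) := by
            rw [e1]; ring
    rw [← mul_assoc] at h3
    rw [hfeq] at h3
    exact h3
  -- measurability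
  have hmeas : ∀ p : ℕ × ℕ, AEStronglyMeasurable (fun t : ℝ => C p * ((t:ℂ))^(m p))
      (volume.restrict (Set.Ioc (0:ℝ) 1)) := fun p =>
    (continuous_const.mul (Complex.continuous_ofReal.pow _)).aestronglyMeasurable
  -- finiteness of the lintegral sum
  have hCnn : Summable (fun p : ℕ × ℕ => ‖C p‖₊) := by
    rw [← NNReal.summable_coe]
    simpa [coe_nnnorm] using hCnorm
  have hlint : ∑' p : ℕ × ℕ, ∫⁻ t in Set.Ioc (0:ℝ) 1, ‖C p * ((t:ℂ))^(m p)‖₊ ≠ ⊤ := by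
    have hb : ∀ p : ℕ × ℕ,
        (∫⁻ t in Set.Ioc (0:ℝ) 1, ‖C p * ((t:ℂ))^(m p)‖₊) ≤ (‖C p‖₊ : ENNReal) := by
      intro p
      have hle : ∀ t ∈ Set.Ioc (0:ℝ) 1,
          ((‖C p * ((t:ℂ))^(m p)‖₊ : ENNReal)) ≤ (‖C p‖₊ : ENNReal) := by
        intro t ht
        rw [ENNReal.coe_le_coe, ← NNReal.coe_le_coe, coe_nnnorm, coe_nnnorm]
        rw [norm_mul, norm_pow, Complex.norm_real]
        have h5 : ‖t‖ ≤ 1 := by rw [Real.norm_of_nonneg ht.1.le]; exact ht.2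
        have h6 : ‖t‖^(m p) ≤ 1 := pow_le_one₀ (norm_nonneg t) h5
        nlinarith [norm_nonneg (C p), pow_nonneg (norm_nonneg t) (m p)]
      calc (∫⁻ t in Set.Ioc (0:ℝ) 1, ‖C p * ((t:ℂ))^(m p)‖₊)
          ≤ ∫⁻ _ in Set.Ioc (0:ℝ) 1, (‖C p‖₊ : ENNReal) :=
            setLIntegral_mono' measurableSet_Ioc hle
        _ = ‖C p‖₊ * volume (Set.Ioc (0:ℝ) 1) := setLIntegral_const _ _
        _ = ‖C p‖₊ := by simp [Real.volume_Ioc]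
    have hfin : ∑' p : ℕ × ℕ, (‖C p‖₊ : ENNReal) ≠ ⊤ := by
      rw [ENNReal.tsum_coe_ne_top_iff_summable]
      exact hCnn
    exact ne_top_of_le_ne_top hfin (ENNReal.tsum_le_tsum hb)
  -- the swap
  have hswap := MeasureTheory.integral_tsum hmeas hlint
  -- value of each integral
  have hval : ∀ p : ℕ × ℕ, (∫ t in Set.Ioc (0:ℝ) 1, C p * ((t:ℂ))^(m p)) =
      C p * (((m p + 1 : ℕ) : ℂ))⁻¹ := by
    intro p
    rw [← intervalIntegral.integral_of_le (zero_le_one)]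
    rw [intervalIntegral.integral_const_mul]
    congr 1
    have hcast : (fun t : ℝ => ((t:ℂ))^(m p)) = fun t : ℝ => (((t^(m p) : ℝ)) : ℂ) := by
      funext t; push_cast; ring
    rw [hcast, intervalIntegral.integral_ofReal, integral_pow]
    push_cast
    norm_num
  -- assemble
  rw [intervalIntegral.integral_of_le (zero_le_one)]
  have hcongr : (∫ t in Set.Ioc (0:ℝ) 1,
        z * ((1 : ℂ) - (z * (t : ℂ)) ^ n) ^ (-c) * ((1 : ℂ) + (z * (t : ℂ)) ^ n)⁻¹)
      = ∫ t in Set.Ioc (0:ℝ) 1, ∑' p : ℕ × ℕ, C p * ((t:ℂ))^(m p) := by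
    refine setIntegral_congr_fun measurableSet_Ioc fun t ht => ?_
    exact ((hptwise t ⟨ht.1.le, ht.2⟩).tsum_eq).symm
  rw [hcongr, hswap]
  have htermeq : ∀ p : ℕ × ℕ, (∫ t in Set.Ioc (0:ℝ) 1, C p * ((t:ℂ))^(m p)) =
      (fun p : ℕ × ℕ =>
        (Polynomial.eval (1 / (n : ℂ)) (ascPochhammer ℂ (p.1 + p.2)) *
            Polynomial.eval (1 + 2 / (n : ℂ)) (ascPochhammer ℂ p.1) *
            Polynomial.eval (1 : ℂ) (ascPochhammer ℂ p.2)) /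
          (Polynomial.eval (1 + 1 / (n : ℂ)) (ascPochhammer ℂ (p.1 + p.2)) *
            (Nat.factorial p.1 : ℂ) * (Nat.factorial p.2 : ℂ)) *
          (-1 : ℂ) ^ p.2 * z ^ (n * (p.1 + p.2) + 1)) p := by
    intro p
    show _ = (Polynomial.eval (1 / (n : ℂ)) (ascPochhammer ℂ (p.1 + p.2)) *
            Polynomial.eval (1 + 2 / (n : ℂ)) (ascPochhammer ℂ p.1) *
            Polynomial.eval (1 : ℂ) (ascPochhammer ℂ p.2)) /
          (Polynomial.eval (1 + 1 / (n : ℂ)) (ascPochhammer ℂ (p.1 + p.2)) *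
            (Nat.factorial p.1 : ℂ) * (Nat.factorial p.2 : ℂ)) *
          (-1 : ℂ) ^ p.2 * z ^ (n * (p.1 + p.2) + 1)
    rw [hval p, term_eq n hn p.1 p.2]
    simp only [hCd, hm]
    rw [pow_succ]
    ring
  rw [tsum_congr htermeq]
  -- split the double sum
  have hsummable : Summable (fun p : ℕ × ℕ =>
      (Polynomial.eval (1 / (n : ℂ)) (ascPochhammer ℂ (p.1 + p.2)) *
          Polynomial.eval (1 + 2 / (n : ℂ)) (ascPochhammer ℂ p.1) *
          Polynomial.eval (1 : ℂ) (ascPochhammer ℂ p.2)) /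
        (Polynomial.eval (1 + 1 / (n : ℂ)) (ascPochhammer ℂ (p.1 + p.2)) *
          (Nat.factorial p.1 : ℂ) * (Nat.factorial p.2 : ℂ)) *
        (-1 : ℂ) ^ p.2 * z ^ (n * (p.1 + p.2) + 1)) := by
    refine Summable.of_norm (hCnorm.of_nonneg_of_le (fun p => norm_nonneg _) fun p => ?_)
    have h7 := term_eq n hn p.1 p.2
    have heq : (Polynomial.eval (1 / (n : ℂ)) (ascPochhammer ℂ (p.1 + p.2)) *
          Polynomial.eval (1 + 2 / (n : ℂ)) (ascPochhammer ℂ p.1) *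
          Polynomial.eval (1 : ℂ) (ascPochhammer ℂ p.2)) /
        (Polynomial.eval (1 + 1 / (n : ℂ)) (ascPochhammer ℂ (p.1 + p.2)) *
          (Nat.factorial p.1 : ℂ) * (Nat.factorial p.2 : ℂ)) *
        (-1 : ℂ) ^ p.2 * z ^ (n * (p.1 + p.2) + 1)
        = C p * (((m p + 1 : ℕ) : ℂ))⁻¹ := by
      rw [h7]
      simp only [hCd, hm]
      rw [pow_succ]
      ring
    rw [heq, norm_mul]
    have h8 : ‖(((m p + 1 : ℕ) : ℂ))⁻¹‖ ≤ 1 := by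
      rw [norm_inv]
      rw [Complex.norm_natCast]
      rw [inv_le_one_iff₀]
      right
      exact_mod_cast Nat.one_le_iff_ne_zero.mpr (Nat.succ_ne_zero _)
    nlinarith [norm_nonneg (C p)]
  exact Summable.tsum_prod' hsummable (fun k => (hsummable.prod_factor k))
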